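/- Let p > 1 with (p-1)D²/2 < 1, and suppose f : [0,T] → [0,∞) is continuous and satisfies f(t) ≤ A t^p + (p(p-1)D²/2) ∫₀^t f(s) s^{-1} ds for all t ∈ (0,T], together with the a priori bound f(t) ≤ C t^{β} near 0 for some β > (p/2)(p-1)D². Then f(t) ≤ A t^p / (1 - (p-1)D²/2) for all t ∈ [0,T]. -/

import Mathlib

open Set intervalIntegral MeasureTheory Filter Topology

/-- Singular Grönwall inequality with kernel `1/s`: if `f : [0,T] → [0,∞)` is
continuous, satisfies `f(t) ≤ A t^p + (p(p-1)D²/2) ∫₀ᵗ f(s)/s ds` on `(0,T]`, and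
is a priori bounded by `C t^β` near `0` with `β > (p/2)(p-1)D²`, then
`f(t) ≤ A t^p / (1 - (p-1)D²/2)` on `[0,T]`, provided `(p-1)D²/2 < 1`. -/
theorem stmt_16 (p D A C T β : ℝ)
    (hp : 1 < p) (hD : 0 < D) (hA : 0 < A) (hC : 0 < C) (hT : 0 < T)
    (hpD : (p - 1) * D ^ 2 / 2 < 1)
    (hβ : (p / 2) * (p - 1) * D ^ 2 < β)
    (f : ℝ → ℝ)
    (hf_cont : ContinuousOn f (Icc 0 T))
    (hf_nonneg : ∀ t ∈ Icc (0:ℝ) T, 0 ≤ f t)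
    (hineq : ∀ t ∈ Ioc (0:ℝ) T,
      f t ≤ A * t ^ p + (p * (p - 1) * D ^ 2 / 2) * ∫ s in (0:ℝ)..t, f s / s)
    (hnear : ∃ t₁ ∈ Ioc (0:ℝ) T, ∀ t ∈ Ioc (0:ℝ) t₁, f t ≤ C * t ^ β) :
    ∀ t ∈ Icc (0:ℝ) T, f t ≤ A * t ^ p / (1 - (p - 1) * D ^ 2 / 2) := by
  obtain ⟨t₁, ht₁, hbd⟩ := hnear
  have ht₁0 : 0 < t₁ := ht₁.1
  have ht₁T : t₁ ≤ T := ht₁.2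
  set K : ℝ := p * (p - 1) * D ^ 2 / 2 with hKdef
  clear_value K
  have hp0 : 0 < p := by linarith
  have hD2 : 0 < D ^ 2 := by positivity
  have hK0 : 0 < K := by
    rw [hKdef]
    nlinarith [mul_pos (mul_pos hp0 (show (0:ℝ) < p - 1 by linarith)) hD2]
  have hKp : K < p := by
    have := mul_lt_mul_of_pos_left hpD hp0
    rw [hKdef]; nlinarith
  have hpK : 0 < p - K := by linarith
  have hβK : K < β := by
    have h1 : (p / 2) * (p - 1) * D ^ 2 = K := by rw [hKdef]; ring
    linarith [h1 ▸ hβ]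
  have hβ0 : 0 < β := hK0.trans hβK
  -- upper bound for f on [0,T]
  obtain ⟨M, hMub⟩ := isCompact_Icc.bddAbove_image hf_cont
  have hM : ∀ x ∈ Icc (0:ℝ) T, f x ≤ M := fun x hx => hMub ⟨x, hx, rfl⟩
  have hM0 : 0 ≤ M := le_trans (hf_nonneg T ⟨hT.le, le_rfl⟩) (hM T ⟨hT.le, le_rfl⟩)
  set g : ℝ → ℝ := fun s => f s / s with hgdef
  clear_value g
  have hg_nonneg : ∀ u ∈ Icc (0:ℝ) T, 0 ≤ g u := by
    intro u hu
    simp only [hgdef]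
    rcases eq_or_lt_of_le hu.1 with h | h
    · rw [← h]
      simp
    · exact div_nonneg (hf_nonneg u hu) h.le
  have hgcont : ContinuousOn g (Ioc 0 T) := by
    rw [hgdef]
    exact (hf_cont.mono Ioc_subset_Icc_self).div
      (continuous_id.continuousOn) (fun x hx => ne_of_gt hx.1)
  -- integrability of g near 0
  have hgsmall : ∀ s ∈ Ioc (0:ℝ) t₁, g s ≤ C * s ^ (β - 1) := by
    intro s hs
    have hs0 : 0 < s := hs.1
    have := hbd s hs
    rw [Real.rpow_sub_one hs0.ne' β]
    calc g s = f s / s := by rw [hgdef]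
      _ ≤ C * s ^ β / s := by
          exact div_le_div_of_nonneg_right this hs0.le |>.trans_eq rfl
      _ = C * (s ^ β / s) := by ring
  have hInt : IntegrableOn g (Ioc 0 T) := by
    have h1 : IntervalIntegrable (fun s : ℝ => s ^ (β - 1)) volume 0 T :=
      intervalIntegrable_rpow' (by linarith)
    have h1' : IntegrableOn (fun s : ℝ => C * s ^ (β - 1)) (Ioc 0 T) :=
      ((intervalIntegrable_iff_integrableOn_Ioc_of_le hT.le).mp h1).const_mul C
    have h2 : IntegrableOn (fun _ : ℝ => M / t₁) (Ioc 0 T) :=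
      integrableOn_const measure_Ioc_lt_top.ne
    refine (h1'.add h2).mono' (hgcont.aestronglyMeasurable measurableSet_Ioc) ?_
    refine (ae_restrict_iff' measurableSet_Ioc).mpr (ae_of_all _ fun s hs => ?_)
    have hs0 : 0 < s := hs.1
    have hg0 : 0 ≤ g s := hg_nonneg s ⟨hs0.le, hs.2⟩
    rw [Real.norm_of_nonneg hg0]
    simp only [Pi.add_apply]
    rcases le_or_gt s t₁ with h | h
    · have := hgsmall s ⟨hs0, h⟩
      have hMt : 0 ≤ M / t₁ := div_nonneg hM0 ht₁0.le
      linarith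
    · have hfs : f s ≤ M := hM s ⟨hs0.le, hs.2⟩
      have h3 : g s ≤ M / s := by
        rw [hgdef]
        exact div_le_div_of_nonneg_right hfs hs0.le
      have h4 : M / s ≤ M / t₁ := div_le_div_of_nonneg_left hM0 ht₁0 h.le
      have h5 : 0 ≤ C * s ^ (β - 1) := by positivity
      linarith
  have hIntt : ∀ t ∈ Icc (0:ℝ) T, IntervalIntegrable g volume 0 t := fun t ht =>
    (intervalIntegrable_iff_integrableOn_Ioc_of_le ht.1).mpr
      (hInt.mono_set (Ioc_subset_Ioc_right ht.2))
  set F : ℝ → ℝ := fun t => ∫ s in (0:ℝ)..t, g s with hFdef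
  clear_value F
  have hineq' : ∀ t ∈ Ioc (0:ℝ) T, f t ≤ A * t ^ p + K * F t := by
    intro t ht
    have h := hineq t ht
    simp only [hFdef]
    exact h
  have hFcont : ContinuousOn F (Icc 0 T) := by
    have h1 : IntegrableOn g (Icc 0 T) := (integrableOn_Icc_iff_integrableOn_Ioc (ha := by simp)).mpr hInt
    rw [hFdef]
    exact (intervalIntegral.continuousOn_primitive h1).congr
      (fun x hx => intervalIntegral.integral_of_le hx.1)
  have hgcontO : ContinuousOn g (Ioo 0 T) := hgcont.mono Ioo_subset_Ioc_self
  have hFderiv : ∀ t ∈ Ioo (0:ℝ) T, HasDerivAt F (g t) t := by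
    intro t ht
    rw [hFdef]
    exact intervalIntegral.integral_hasDerivAt_right
      (hIntt t ⟨ht.1.le, ht.2.le⟩)
      (hgcontO.stronglyMeasurableAtFilter isOpen_Ioo t ht)
      (hgcontO.continuousAt (isOpen_Ioo.mem_nhds ht))
  have hFnonneg : ∀ t ∈ Icc (0:ℝ) T, 0 ≤ F t := by
    intro t ht
    simp only [hFdef]
    exact intervalIntegral.integral_nonneg ht.1
      (fun u hu => hg_nonneg u ⟨hu.1, hu.2.trans ht.2⟩)
  -- F is small near zero
  have hFsmall : ∀ t ∈ Ioc (0:ℝ) t₁, F t ≤ C / β * t ^ β := by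
    intro t ht
    have ht0 : 0 < t := ht.1
    have hti : IntervalIntegrable (fun s : ℝ => C * s ^ (β - 1)) volume 0 t :=
      (intervalIntegrable_rpow' (by linarith)).const_mul C
    have h1 : F t ≤ ∫ s in (0:ℝ)..t, C * s ^ (β - 1) := by
      simp only [hFdef]
      refine intervalIntegral.integral_mono_on ht0.le
        (hIntt t ⟨ht0.le, ht.2.trans ht₁T⟩) hti ?_
      intro x hx
      rcases eq_or_lt_of_le hx.1 with h | h
      · have : g x = 0 := by simp [hgdef, ← h]
        rw [this]
        positivity
      · exact hgsmall x ⟨h, hx.2.trans ht.2⟩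
    have h2 : (∫ s in (0:ℝ)..t, C * s ^ (β - 1)) = C / β * t ^ β := by
      rw [intervalIntegral.integral_const_mul,
        integral_rpow (Or.inl (by linarith : (-1:ℝ) < β - 1))]
      rw [show β - 1 + 1 = β by ring, Real.zero_rpow hβ0.ne']
      ring
    linarith [h2 ▸ h1]
  -- the comparison function
  set G : ℝ → ℝ := fun t => F t * t ^ (-K) - A / (p - K) * t ^ (p - K) with hGdef
  clear_value G
  have hGanti : AntitoneOn G (Ioc 0 T) := by
    have hint : interior (Ioc (0:ℝ) T) = Ioo 0 T := interior_Ioc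
    have hGd : ∀ x ∈ Ioo (0:ℝ) T, HasDerivAt G
        (g x * x ^ (-K) + F x * (-K * x ^ (-K - 1))
          - A / (p - K) * ((p - K) * x ^ (p - K - 1))) x := by
      intro x hx
      have hx0 : 0 < x := hx.1
      have d1 : HasDerivAt (fun y : ℝ => y ^ (-K)) (-K * x ^ (-K - 1)) x :=
        Real.hasDerivAt_rpow_const (Or.inl hx0.ne')
      have d2 : HasDerivAt (fun y : ℝ => y ^ (p - K)) ((p - K) * x ^ (p - K - 1)) x :=
        Real.hasDerivAt_rpow_const (Or.inl hx0.ne')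
      rw [hGdef]
      exact ((hFderiv x hx).mul d1).sub (d2.const_mul (A / (p - K)))
    have hGcont : ContinuousOn G (Ioc 0 T) := by
      have c1 : ContinuousOn (fun t : ℝ => t ^ (-K)) (Ioc 0 T) := fun x hx =>
        (Real.continuousAt_rpow_const x (-K) (Or.inl hx.1.ne')).continuousWithinAt
      have c2 : ContinuousOn (fun t : ℝ => t ^ (p - K)) (Ioc 0 T) := fun x hx =>
        (Real.continuousAt_rpow_const x (p - K) (Or.inl hx.1.ne')).continuousWithinAt
      rw [hGdef]
      exact ((hFcont.mono Ioc_subset_Icc_self).mul c1).sub (continuousOn_const.mul c2)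
    refine antitoneOn_of_deriv_nonpos (convex_Ioc 0 T) hGcont ?_ ?_
    · rw [hint]
      exact fun x hx => ((hGd x hx).differentiableAt).differentiableWithinAt
    · rw [hint]
      intro x hx
      rw [(hGd x hx).deriv]
      have hx0 : 0 < x := hx.1
      have hfx : f x ≤ A * x ^ p + K * F x := hineq' x ⟨hx0, hx.2.le⟩
      have hmul : f x * x ^ (-K - 1) ≤ (A * x ^ p + K * F x) * x ^ (-K - 1) :=
        mul_le_mul_of_nonneg_right hfx (Real.rpow_nonneg hx0.le _)
      have e1 : x ^ p * x ^ (-K - 1) = x ^ (p - K - 1) := by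
        rw [← Real.rpow_add hx0, show p + (-K - 1) = p - K - 1 by ring]
      have e2 : g x * x ^ (-K) = f x * x ^ (-K - 1) := by
        have h : x ^ (-K - 1) = x ^ (-K) / x := by
          rw [Real.rpow_sub_one hx0.ne']
        simp only [hgdef]
        rw [h]
        ring
      have e3 : A / (p - K) * ((p - K) * x ^ (p - K - 1)) = A * x ^ (p - K - 1) := by
        field_simp
      calc g x * x ^ (-K) + F x * (-K * x ^ (-K - 1))
            - A / (p - K) * ((p - K) * x ^ (p - K - 1))
          = f x * x ^ (-K - 1) - K * (F x * x ^ (-K - 1)) - A * x ^ (p - K - 1) := by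
            rw [e2, e3]; ring
        _ ≤ (A * x ^ p + K * F x) * x ^ (-K - 1) - K * (F x * x ^ (-K - 1))
            - A * x ^ (p - K - 1) := by linarith
        _ = A * (x ^ p * x ^ (-K - 1)) - A * x ^ (p - K - 1) := by ring
        _ = 0 := by rw [e1]; ring
  -- G ≤ 0 on (0,T]
  have hGle : ∀ t ∈ Ioc (0:ℝ) T, G t ≤ 0 := by
    intro t ht
    set τ : ℝ := min t t₁ with hτdef
    have hτ0 : 0 < τ := lt_min ht.1 ht₁0
    have key : ∀ s ∈ Ioc (0:ℝ) τ, G t ≤ C / β * s ^ (β - K) := by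
      intro s hs
      have hs0 : 0 < s := hs.1
      have hst : s ≤ t := hs.2.trans (min_le_left _ _)
      have hst₁ : s ≤ t₁ := hs.2.trans (min_le_right _ _)
      have h1 : G t ≤ G s := hGanti ⟨hs0, hst.trans ht.2⟩ ht hst
      have h2 : G s ≤ F s * s ^ (-K) := by
        have h5 : 0 ≤ A / (p - K) * s ^ (p - K) := by positivity
        have hGs : G s = F s * s ^ (-K) - A / (p - K) * s ^ (p - K) := by simp only [hGdef]
        linarith
      have h3 : F s * s ^ (-K) ≤ C / β * s ^ β * s ^ (-K) :=
        mul_le_mul_of_nonneg_right (hFsmall s ⟨hs0, hst₁⟩) (Real.rpow_nonneg hs0.le _)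
      have h4 : C / β * s ^ β * s ^ (-K) = C / β * s ^ (β - K) := by
        rw [mul_assoc, ← Real.rpow_add hs0, show β + -K = β - K by ring]
      linarith [h4 ▸ h3]
    have hten : Tendsto (fun s : ℝ => C / β * s ^ (β - K)) (𝓝[>] (0:ℝ)) (𝓝 0) := by
      have hc : ContinuousAt (fun s : ℝ => s ^ (β - K)) 0 :=
        Real.continuousAt_rpow_const 0 (β - K) (Or.inr (by linarith))
      have h2 : Tendsto (fun s : ℝ => C / β * s ^ (β - K)) (𝓝 0)
          (𝓝 (C / β * (0:ℝ) ^ (β - K))) := by exact hc.const_mul (C / β)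
      rw [Real.zero_rpow (show β - K ≠ 0 from (by linarith : (0:ℝ) < β - K).ne'), mul_zero] at h2
      exact h2.mono_left nhdsWithin_le_nhds
    refine ge_of_tendsto hten ?_
    filter_upwards [Ioc_mem_nhdsGT hτ0] with s hs
    exact key s hs
  -- conclude F t ≤ A/(p-K) * t^p on (0,T]
  have hFle : ∀ t ∈ Ioc (0:ℝ) T, F t ≤ A / (p - K) * t ^ p := by
    intro t ht
    have ht0 : 0 < t := ht.1
    have h1 : F t * t ^ (-K) ≤ A / (p - K) * t ^ (p - K) := by
      have h6 := hGle t ht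
      have hGs : G t = F t * t ^ (-K) - A / (p - K) * t ^ (p - K) := by simp only [hGdef]
      linarith
    have h2 : t ^ (-K) * t ^ K = 1 := by
      rw [← Real.rpow_add ht0, show -K + K = 0 by ring, Real.rpow_zero]
    have h3 : t ^ (p - K) * t ^ K = t ^ p := by
      rw [← Real.rpow_add ht0, show p - K + K = p by ring]
    calc F t = F t * t ^ (-K) * t ^ K := by rw [mul_assoc, h2, mul_one]
      _ ≤ A / (p - K) * t ^ (p - K) * t ^ K :=
          mul_le_mul_of_nonneg_right h1 (Real.rpow_nonneg ht0.le _)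
      _ = A / (p - K) * t ^ p := by rw [mul_assoc, h3]
  -- final conclusion
  have hden : (0:ℝ) < 1 - (p - 1) * D ^ 2 / 2 := by linarith
  intro t ht
  rcases eq_or_lt_of_le ht.1 with h0 | h0
  · -- t = 0
    subst h0
    rw [Real.zero_rpow hp0.ne', mul_zero, zero_div]
    have hcw : Tendsto f (𝓝[Ioc (0:ℝ) t₁] 0) (𝓝 (f 0)) :=
      (hf_cont 0 ⟨le_rfl, hT.le⟩).mono_left
        (nhdsWithin_mono 0 (fun x hx => ⟨hx.1.le, hx.2.trans ht₁T⟩))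
    have hneb : (𝓝[Ioc (0:ℝ) t₁] (0:ℝ)).NeBot := by
      refine mem_closure_iff_nhdsWithin_neBot.mp ?_
      rw [closure_Ioc ht₁0.ne]
      exact ⟨le_rfl, ht₁0.le⟩
    have htb : Tendsto (fun s : ℝ => C * s ^ β) (𝓝[Ioc (0:ℝ) t₁] 0) (𝓝 0) := by
      have hc : ContinuousAt (fun s : ℝ => C * s ^ β) 0 :=
        (Real.continuousAt_rpow_const 0 β (Or.inr hβ0.le)).const_mul C
      have h2 : Tendsto (fun s : ℝ => C * s ^ β) (𝓝 0)
          (𝓝 (C * (0:ℝ) ^ β)) := by exact hc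
      rw [Real.zero_rpow hβ0.ne', mul_zero] at h2
      exact h2.mono_left nhdsWithin_le_nhds
    exact le_of_tendsto_of_tendsto hcw htb
      (eventually_mem_nhdsWithin.mono fun s hs => hbd s hs)
  · -- t > 0
    have htm : t ∈ Ioc (0:ℝ) T := ⟨h0, ht.2⟩
    have h1 : f t ≤ A * t ^ p + K * F t := hineq' t htm
    have h2 : F t ≤ A / (p - K) * t ^ p := hFle t htm
    have h3 : f t ≤ A * t ^ p + K * (A / (p - K) * t ^ p) := by nlinarith
    have hEq : A * t ^ p + K * (A / (p - K) * t ^ p)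
        = A * t ^ p / (1 - (p - 1) * D ^ 2 / 2) := by
      have h7 : p - K ≠ 0 := hpK.ne'
      have h8 : 1 - (p - 1) * D ^ 2 / 2 ≠ 0 := hden.ne'
      rw [eq_div_iff h8]
      field_simp
      rw [hKdef]
      ring
    rw [← hEq]; exact h3
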